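/- Proposition 3.1: suppose the Top-K answers are drawn without replacement from the categorical distribution p, i.e., the injective sequence s : Fin K → α is distributed according to the Plackett–Luce weights W. Let u ≠ v be elements of α, let E(s) be the event that at least one of u, v occurs among the entries of s, and say 'u precedes v in s' if u occurs in s and either v does not occur in s or the first occurrence of u in s is at an earlier position than the first occurrence of v. Then the conditional probability that u precedes v given E equals p(u)/(p(u)+p(v)); that is, (∑_{s : u precedes v in s} W(s)) / (∑_{s : E(s)} W(s)) = p(u) / (p(u) + p(v)). -/
import Mathlib


open Finset

open scoped Classical

/-- The Plackett–Luce weight of a sequence `s : Fin K → α` of draws without replacement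
from the categorical distribution `p`:
`W(s) = ∏_{j=0}^{K-1} p(s j) / (1 - ∑_{l<j} p(s l))`. -/
noncomputable def plWeight {α : Type*} [Fintype α] (p : α → ℝ) {K : ℕ} (s : Fin K → α) : ℝ :=
  ∏ j : Fin K, p (s j) / (1 - ∑ l ∈ univ.filter (fun l => l < j), p (s l))

/-- `u` precedes `v` in the sequence `s`: `u` occurs in `s`, and either `v` does not occur
in `s`, or `u` occurs at an earlier position than `v`. -/
def precedes {α : Type*} (u v : α) {K : ℕ} (s : Fin K → α) : Prop :=
  (∃ i, s i = u) ∧ ((∀ i, s i ≠ v) ∨ ∃ i k : Fin K, s i = u ∧ s k = v ∧ i < k)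

namespace PLaux

variable {α : Type*} [Fintype α]

/-- Plackett–Luce weight relative to a support `A` (total mass `∑ a ∈ A, p a`). -/
noncomputable def plW (p : α → ℝ) (A : Finset α) {K : ℕ} (s : Fin K → α) : ℝ :=
  ∏ j : Fin K, p (s j) / (∑ a ∈ A, p a - ∑ l ∈ univ.filter (fun l => l < j), p (s l))

omit [Fintype α] in
lemma ps_zero (p : α → ℝ) {K : ℕ} (s : Fin (K+1) → α) :
    ∑ l ∈ univ.filter (fun l => l < (0 : Fin (K+1))), p (s l) = 0 := by
  simp [Fin.not_lt_zero]

omit [Fintype α] in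
lemma ps_succ (p : α → ℝ) {K : ℕ} (a : α) (t : Fin K → α) (j : Fin K) :
    ∑ l ∈ univ.filter (fun l => l < Fin.succ j), p ((Fin.cons a t : Fin (K+1) → α) l)
      = p a + ∑ l ∈ univ.filter (fun l => l < j), p (t l) := by
  rw [Finset.sum_filter, Finset.sum_filter, Fin.sum_univ_succ]
  simp [Fin.succ_lt_succ_iff, Fin.succ_pos]

omit [Fintype α] in
lemma plW_cons (p : α → ℝ) {A : Finset α} {a : α} (ha : a ∈ A) {K : ℕ} (t : Fin K → α) :
    plW p A (Fin.cons a t : Fin (K+1) → α) = p a / (∑ x ∈ A, p x) * plW p (A.erase a) t := by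
  rw [plW, plW, Fin.prod_univ_succ]
  have h0 : ∑ l ∈ univ.filter (fun l => l < (0 : Fin (K+1))), p ((Fin.cons a t : Fin (K+1) → α) l) = 0 :=
    ps_zero p _
  rw [h0]
  simp only [Fin.cons_zero, Fin.cons_succ, sub_zero]
  congr 1
  refine Finset.prod_congr rfl fun j _ => ?_
  rw [ps_succ, Finset.sum_erase_eq_sub ha]
  ring_nf

lemma sum_succ {K : ℕ} (g : (Fin (K+1) → α) → ℝ) :
    ∑ s : Fin (K+1) → α, g s = ∑ a : α, ∑ t : Fin K → α, g (Fin.cons a t) := by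
  rw [← Fintype.sum_equiv (Fin.consEquiv (fun _ => α))
    (fun x => g (Fin.cons x.1 x.2)) g (fun x => rfl), Fintype.sum_prod_type]

/-- Total Plackett–Luce mass of injective sequences with values in `A`. -/
noncomputable def Gsum (p : α → ℝ) (A : Finset α) (K : ℕ) : ℝ :=
  ∑ s : Fin K → α,
    if Function.Injective s ∧ ∀ j, s j ∈ A then plW p A s else 0

omit [Fintype α] in
lemma cons_mem_iff {K : ℕ} (a : α) (t : Fin K → α) (A : Finset α) :
    (Function.Injective (Fin.cons a t : Fin (K+1) → α) ∧
        ∀ j, (Fin.cons a t : Fin (K+1) → α) j ∈ A)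
      ↔ a ∈ A ∧ (Function.Injective t ∧ ∀ j, t j ∈ A.erase a) := by
  rw [Fin.cons_injective_iff]
  constructor
  · rintro ⟨⟨har, hinj⟩, hmem⟩
    refine ⟨by simpa using hmem 0, hinj, fun j => ?_⟩
    rw [Finset.mem_erase]
    exact ⟨fun h => har ⟨j, h⟩, by simpa using hmem j.succ⟩
  · rintro ⟨haA, hinj, hmem⟩
    refine ⟨⟨fun ⟨j, hj⟩ => (Finset.mem_erase.1 (hmem j)).1 hj, hinj⟩, fun j => ?_⟩
    rcases Fin.eq_zero_or_eq_succ j with rfl | ⟨i, rfl⟩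
    · simpa using haA
    · simpa using (Finset.mem_erase.1 (hmem i)).2

lemma Gsum_succ (p : α → ℝ) (A : Finset α) (K : ℕ) :
    Gsum p A (K+1) = ∑ a ∈ A, p a / (∑ x ∈ A, p x) * Gsum p (A.erase a) K := by
  rw [Gsum, sum_succ]
  rw [← Finset.sum_subset (Finset.subset_univ A)]
  · refine Finset.sum_congr rfl fun a ha => ?_
    rw [Gsum, Finset.mul_sum]
    refine Finset.sum_congr rfl fun t _ => ?_
    rw [if_congr ((cons_mem_iff a t A).trans (and_iff_right ha))
      (plW_cons p ha t) rfl, mul_ite, mul_zero]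
  · intro a _ ha
    refine Finset.sum_eq_zero fun t _ => ?_
    rw [if_neg]
    intro h
    exact ha ((cons_mem_iff a t A).1 h).1

lemma Gsum_zero (p : α → ℝ) (A : Finset α) : Gsum p A 0 = 1 := by
  rw [Gsum]
  have h2 : ∀ s : Fin 0 → α,
      (if Function.Injective s ∧ ∀ j, s j ∈ A then plW p A s else 0) = 1 := fun s => by
    rw [if_pos ⟨fun i j _ => Subsingleton.elim i j, fun j => j.elim0⟩]
    simp [plW]
  rw [Finset.sum_congr rfl fun s _ => h2 s]
  simp

lemma Gsum_eq_one (p : α → ℝ) (hp : ∀ a, 0 < p a) :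
    ∀ (K : ℕ) (A : Finset α), K ≤ A.card → Gsum p A K = 1 := by
  intro K
  induction K with
  | zero => exact fun A _ => Gsum_zero p A
  | succ K ih =>
    intro A hA
    have hne : A.Nonempty := Finset.card_pos.1 (lt_of_lt_of_le (Nat.succ_pos K) hA)
    have hT : 0 < ∑ x ∈ A, p x := Finset.sum_pos (fun a _ => hp a) hne
    rw [Gsum_succ]
    rw [Finset.sum_congr rfl fun a ha => by
      rw [ih (A.erase a) (by rw [Finset.card_erase_of_mem ha]; omega), mul_one]]
    rw [← Finset.sum_div, div_eq_one_iff_eq hT.ne']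

omit [Fintype α] in
lemma prec_cons_u {u v : α} (huv : u ≠ v) {K : ℕ} (t : Fin K → α) :
    precedes u v (Fin.cons u t : Fin (K+1) → α) := by
  refine ⟨⟨0, rfl⟩, ?_⟩
  by_cases hv : ∃ k, t k = v
  · obtain ⟨k, hk⟩ := hv
    exact Or.inr ⟨0, k.succ, rfl, by simpa using hk, Fin.succ_pos k⟩
  · refine Or.inl fun i => ?_
    rcases Fin.eq_zero_or_eq_succ i with rfl | ⟨j, rfl⟩
    · simpa using huv
    · simpa using fun h => hv ⟨j, h⟩

omit [Fintype α] in
lemma prec_cons_v {u v : α} {K : ℕ} {t : Fin K → α} (hvr : ∀ j, t j ≠ v) :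
    ¬ precedes u v (Fin.cons v t : Fin (K+1) → α) := by
  rintro ⟨-, h | ⟨i, k, hi, hk, hik⟩⟩
  · exact h 0 rfl
  · rcases Fin.eq_zero_or_eq_succ k with rfl | ⟨j, rfl⟩
    · exact absurd hik (by simp [Fin.not_lt_zero])
    · exact hvr j (by simpa using hk)

omit [Fintype α] in
lemma prec_cons_other {u v a : α} (hau : a ≠ u) (hav : a ≠ v) {K : ℕ} (t : Fin K → α) :
    precedes u v (Fin.cons a t : Fin (K+1) → α) ↔ precedes u v t := by
  unfold precedes
  constructor
  · rintro ⟨⟨i, hi⟩, h⟩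
    obtain ⟨i', rfl⟩ : ∃ i', i = Fin.succ i' := by
      rcases Fin.eq_zero_or_eq_succ i with rfl | ⟨j, rfl⟩
      · exact absurd hi (by simpa using hau)
      · exact ⟨j, rfl⟩
    rw [Fin.cons_succ] at hi
    refine ⟨⟨i', hi⟩, ?_⟩
    rcases h with h | ⟨i1, k1, h1, h2, h3⟩
    · exact Or.inl fun j => by simpa using h j.succ
    · obtain ⟨i1', rfl⟩ : ∃ j, i1 = Fin.succ j := by
        rcases Fin.eq_zero_or_eq_succ i1 with rfl | ⟨j, rfl⟩
        · exact absurd h1 (by simpa using hau)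
        · exact ⟨j, rfl⟩
      obtain ⟨k1', rfl⟩ : ∃ j, k1 = Fin.succ j := by
        rcases Fin.eq_zero_or_eq_succ k1 with rfl | ⟨j, rfl⟩
        · exact absurd h2 (by simpa using hav)
        · exact ⟨j, rfl⟩
      rw [Fin.cons_succ] at h1 h2
      exact Or.inr ⟨i1', k1', h1, h2, by simpa [Fin.succ_lt_succ_iff] using h3⟩
  · rintro ⟨⟨i, hi⟩, h⟩
    refine ⟨⟨i.succ, by simpa using hi⟩, ?_⟩
    rcases h with h | ⟨i1, k1, h1, h2, h3⟩
    · refine Or.inl fun j => ?_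
      rcases Fin.eq_zero_or_eq_succ j with rfl | ⟨j', rfl⟩
      · simpa using hav
      · simpa using h j'
    · exact Or.inr ⟨i1.succ, k1.succ, by simpa using h1, by simpa using h2,
        by simpa [Fin.succ_lt_succ_iff] using h3⟩

omit [Fintype α] in
lemma event_iff {u v : α} (huv : u ≠ v) {K : ℕ} {s : Fin K → α}
    (hs : Function.Injective s) :
    ((∃ i, s i = u) ∨ (∃ i, s i = v)) ↔ (precedes u v s ∨ precedes v u s) := by
  constructor
  · intro h
    have main : ∀ (x y : α), x ≠ y → (∃ i, s i = x) →
        precedes x y s ∨ precedes y x s := by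
      intro x y hxy ⟨i, hi⟩
      by_cases hy : ∃ k, s k = y
      · obtain ⟨k, hk⟩ := hy
        have hik : i ≠ k := fun h => hxy (by rw [← hi, h, hk])
        rcases lt_or_gt_of_ne hik with hlt | hgt
        · exact Or.inl ⟨⟨i, hi⟩, Or.inr ⟨i, k, hi, hk, hlt⟩⟩
        · exact Or.inr ⟨⟨k, hk⟩, Or.inr ⟨k, i, hk, hi, hgt⟩⟩
      · exact Or.inl ⟨⟨i, hi⟩, Or.inl fun k hk => hy ⟨k, hk⟩⟩
    rcases h with h | h
    · exact main u v huv h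
    · exact (main v u huv.symm h).symm
  · rintro (⟨⟨i, hi⟩, -⟩ | ⟨⟨i, hi⟩, -⟩)
    · exact Or.inl ⟨i, hi⟩
    · exact Or.inr ⟨i, hi⟩

omit [Fintype α] in
lemma not_both {u v : α} (huv : u ≠ v) {K : ℕ} {s : Fin K → α}
    (hs : Function.Injective s) :
    ¬ (precedes u v s ∧ precedes v u s) := by
  rintro ⟨⟨hu, h1⟩, ⟨hv, h2⟩⟩
  obtain ⟨k0, hk0⟩ := hv
  obtain ⟨i0, hi0⟩ := hu
  rcases h1 with h1 | ⟨i1, k1, hi1, hk1, hik1⟩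
  · exact h1 k0 hk0
  rcases h2 with h2 | ⟨i2, k2, hi2, hk2, hik2⟩
  · exact h2 i0 hi0
  have e1 : i1 = k2 := hs (by rw [hi1, hk2])
  have e2 : k1 = i2 := hs (by rw [hk1, hi2])
  rw [e1] at hik1
  rw [e2] at hik1
  exact absurd (hik2.trans hik1) (lt_irrefl _)

/-- Plackett–Luce mass of injective sequences with values in `A` in which `u` precedes `v`. -/
noncomputable def Nsum (p : α → ℝ) (A : Finset α) (K : ℕ) (u v : α) : ℝ :=
  ∑ s : Fin K → α,
    if Function.Injective s ∧ (∀ j, s j ∈ A) ∧ precedes u v s then plW p A s else 0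

lemma Nsum_zero (p : α → ℝ) (A : Finset α) (u v : α) : Nsum p A 0 u v = 0 := by
  rw [Nsum]
  refine Finset.sum_eq_zero fun s _ => ?_
  rw [if_neg]
  rintro ⟨-, -, ⟨i, -⟩, -⟩
  exact i.elim0

lemma Nsum_succ (p : α → ℝ) {A : Finset α} {u v : α} (hu : u ∈ A) (hv : v ∈ A)
    (huv : u ≠ v) (K : ℕ) :
    Nsum p A (K+1) u v
      = p u / (∑ x ∈ A, p x) * Gsum p (A.erase u) K
        + ∑ a ∈ (A.erase u).erase v, p a / (∑ x ∈ A, p x) * Nsum p (A.erase a) K u v := by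
  rw [Nsum, sum_succ]
  rw [← Finset.add_sum_erase univ _ (Finset.mem_univ u)]
  congr 1
  · rw [Gsum, Finset.mul_sum]
    refine Finset.sum_congr rfl fun t _ => ?_
    have hiff : (Function.Injective (Fin.cons u t : Fin (K+1) → α) ∧
        (∀ j, (Fin.cons u t : Fin (K+1) → α) j ∈ A) ∧
          precedes u v (Fin.cons u t : Fin (K+1) → α))
        ↔ (Function.Injective t ∧ ∀ j, t j ∈ A.erase u) := by
      constructor
      · rintro ⟨h1, h2, -⟩
        exact ((cons_mem_iff u t A).1 ⟨h1, h2⟩).2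
      · intro h
        obtain ⟨h1, h2⟩ := (cons_mem_iff u t A).2 ⟨hu, h⟩
        exact ⟨h1, h2, prec_cons_u huv t⟩
    rw [if_congr hiff (plW_cons p hu t) rfl, mul_ite, mul_zero]
  · rw [← Finset.sum_subset (show (A.erase u).erase v ⊆ univ.erase u from
      fun x hx => Finset.mem_erase.2 ⟨(Finset.mem_erase.1 (Finset.mem_erase.1 hx).2).1,
        Finset.mem_univ x⟩)]
    · refine Finset.sum_congr rfl fun a ha => ?_
      have hav : a ≠ v := (Finset.mem_erase.1 ha).1
      have hau : a ≠ u := (Finset.mem_erase.1 (Finset.mem_erase.1 ha).2).1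
      have haA : a ∈ A := (Finset.mem_erase.1 (Finset.mem_erase.1 ha).2).2
      rw [Nsum, Finset.mul_sum]
      refine Finset.sum_congr rfl fun t _ => ?_
      have hiff : (Function.Injective (Fin.cons a t : Fin (K+1) → α) ∧
          (∀ j, (Fin.cons a t : Fin (K+1) → α) j ∈ A) ∧
            precedes u v (Fin.cons a t : Fin (K+1) → α))
          ↔ (Function.Injective t ∧ (∀ j, t j ∈ A.erase a) ∧ precedes u v t) := by
        rw [prec_cons_other hau hav]
        constructor
        · rintro ⟨h1, h2, h3⟩
          obtain ⟨-, h4, h5⟩ := (cons_mem_iff a t A).1 ⟨h1, h2⟩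
          exact ⟨h4, h5, h3⟩
        · rintro ⟨h1, h2, h3⟩
          obtain ⟨h4, h5⟩ := (cons_mem_iff a t A).2 ⟨haA, h1, h2⟩
          exact ⟨h4, h5, h3⟩
      rw [if_congr hiff (plW_cons p haA t) rfl, mul_ite, mul_zero]
    · intro a ha ha'
      have hau : a ≠ u := (Finset.mem_erase.1 ha).1
      refine Finset.sum_eq_zero fun t _ => ?_
      rw [if_neg]
      rintro ⟨h1, h2, h3⟩
      have h4 := (cons_mem_iff a t A).1 ⟨h1, h2⟩
      by_cases hav : a = v
      · subst hav
        have hvr : ∀ j, t j ≠ a := fun j hj => (Finset.mem_erase.1 (h4.2.2 j)).1 hj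
        exact prec_cons_v hvr h3
      · exact ha' (Finset.mem_erase.2 ⟨hav, Finset.mem_erase.2 ⟨hau, h4.1⟩⟩)

lemma key (p : α → ℝ) (hp : ∀ a, 0 < p a) (u v : α) (huv : u ≠ v) :
    ∀ (K : ℕ) (A : Finset α), u ∈ A → v ∈ A → K ≤ A.card →
      p v * Nsum p A K u v = p u * Nsum p A K v u := by
  intro K
  induction K with
  | zero => intro A _ _ _; rw [Nsum_zero, Nsum_zero]; ring
  | succ K ih =>
    intro A hu hv hA
    rw [Nsum_succ p hu hv huv K, Nsum_succ p hv hu huv.symm K,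
      show (A.erase v).erase u = (A.erase u).erase v from Finset.erase_right_comm]
    rw [Gsum_eq_one p hp K (A.erase u) (by rw [Finset.card_erase_of_mem hu]; omega),
      Gsum_eq_one p hp K (A.erase v) (by rw [Finset.card_erase_of_mem hv]; omega)]
    rw [mul_add, mul_add, Finset.mul_sum, Finset.mul_sum]
    congr 1
    · ring
    · refine Finset.sum_congr rfl fun a ha => ?_
      have hav : a ≠ v := (Finset.mem_erase.1 ha).1
      have hau : a ≠ u := (Finset.mem_erase.1 (Finset.mem_erase.1 ha).2).1
      have haA : a ∈ A := (Finset.mem_erase.1 (Finset.mem_erase.1 ha).2).2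
      have hIH := ih (A.erase a) (Finset.mem_erase.2 ⟨fun h => hau h.symm, hu⟩)
        (Finset.mem_erase.2 ⟨fun h => hav h.symm, hv⟩)
        (by rw [Finset.card_erase_of_mem haA]; omega)
      calc p v * (p a / (∑ x ∈ A, p x) * Nsum p (A.erase a) K u v)
          = p a / (∑ x ∈ A, p x) * (p v * Nsum p (A.erase a) K u v) := by ring
        _ = p a / (∑ x ∈ A, p x) * (p u * Nsum p (A.erase a) K v u) := by rw [hIH]
        _ = p u * (p a / (∑ x ∈ A, p x) * Nsum p (A.erase a) K v u) := by ring

lemma plW_pos (p : α → ℝ) (hp : ∀ a, 0 < p a) {A : Finset α} {K : ℕ} {s : Fin K → α}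
    (hs : Function.Injective s) (hm : ∀ j, s j ∈ A) : 0 < plW p A s := by
  rw [plW]
  refine Finset.prod_pos fun j _ => div_pos (hp _) (sub_pos.2 ?_)
  have himg : ∑ l ∈ univ.filter (fun l => l < j), p (s l)
      = ∑ b ∈ (univ.filter (fun l => l < j)).image s, p b := by
    rw [Finset.sum_image]
    intro x _ y _ h
    exact hs h
  rw [himg]
  refine Finset.sum_lt_sum_of_subset ?_ (hm j) ?_ (hp _) fun b _ _ => (hp b).le
  · intro b hb
    obtain ⟨l, -, rfl⟩ := Finset.mem_image.1 hb
    exact hm l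
  · intro h
    obtain ⟨l, hl, hl2⟩ := Finset.mem_image.1 h
    have := hs hl2
    rw [this] at hl
    exact absurd (Finset.mem_filter.1 hl).2 (lt_irrefl j)

end PLaux

/-- Proposition 3.1: if the Top-K answers `s : Fin K → α` are drawn without replacement
from the categorical distribution `p` (i.e. distributed according to the Plackett–Luce
weights `W`), then for `u ≠ v`, the conditional probability that `u` precedes `v` in `s`,
given the event `E` that at least one of `u`, `v` occurs among the entries of `s`,
equals `p u / (p u + p v)`. -/
theorem plackettLuce_pairwise_rank {α : Type*} [Fintype α] (p : α → ℝ)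
    (hp : ∀ a, 0 < p a) (hsum : ∑ a, p a = 1)
    (u v : α) (huv : u ≠ v)
    (K : ℕ) (hK1 : 1 ≤ K) (hK : K ≤ Fintype.card α) :
    (∑ s ∈ (univ : Finset (Fin K → α)).filter
        (fun s => Function.Injective s ∧ precedes u v s),
      plWeight p s)
    / (∑ s ∈ (univ : Finset (Fin K → α)).filter
        (fun s => Function.Injective s ∧ ((∃ i, s i = u) ∨ (∃ i, s i = v))),
      plWeight p s)
    = p u / (p u + p v) := by
  open PLaux in
  have hw : ∀ s : Fin K → α, plWeight p s = plW p univ s := by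
    intro s
    rw [plWeight, plW, hsum]
  have hnum : (∑ s ∈ (univ : Finset (Fin K → α)).filter
      (fun s => Function.Injective s ∧ precedes u v s), plWeight p s)
      = Nsum p univ K u v := by
    rw [Finset.sum_filter, Nsum]
    refine Finset.sum_congr rfl fun s _ => ?_
    exact if_congr (by simp) (hw s) rfl
  have hden : (∑ s ∈ (univ : Finset (Fin K → α)).filter
      (fun s => Function.Injective s ∧ ((∃ i, s i = u) ∨ (∃ i, s i = v))), plWeight p s)
      = Nsum p univ K u v + Nsum p univ K v u := by
    rw [Finset.sum_filter, Nsum, Nsum, ← Finset.sum_add_distrib]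
    refine Finset.sum_congr rfl fun s _ => ?_
    by_cases hinj : Function.Injective s
    · by_cases h1 : precedes u v s
      · have h2 : ¬ precedes v u s := fun h2 => not_both huv hinj ⟨h1, h2⟩
        rw [if_pos ⟨hinj, (event_iff huv hinj).2 (Or.inl h1)⟩,
          if_pos ⟨hinj, fun j => Finset.mem_univ _, h1⟩,
          if_neg (fun h => h2 h.2.2), add_zero, hw]
      · by_cases h2 : precedes v u s
        · rw [if_pos ⟨hinj, (event_iff huv hinj).2 (Or.inr h2)⟩,
            if_neg (fun h => h1 h.2.2),
            if_pos ⟨hinj, fun j => Finset.mem_univ _, h2⟩, zero_add, hw]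
        · rw [if_neg, if_neg (fun h => h1 h.2.2), if_neg (fun h => h2 h.2.2), add_zero]
          rintro ⟨-, hE⟩
          rcases (event_iff huv hinj).1 hE with h | h
          · exact h1 h
          · exact h2 h
    · rw [if_neg (fun h => hinj h.1), if_neg (fun h => hinj h.1),
        if_neg (fun h => hinj h.1), add_zero]
  have hDpos : 0 < (∑ s ∈ (univ : Finset (Fin K → α)).filter
      (fun s => Function.Injective s ∧ ((∃ i, s i = u) ∨ (∃ i, s i = v))), plWeight p s) := by
    obtain ⟨f⟩ : Nonempty (Fin K ↪ α) :=
      Function.Embedding.nonempty_of_card_le (by simpa using hK)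
    set s₀ : Fin K → α := (Equiv.swap u (f ⟨0, hK1⟩)) ∘ f with hs₀
    have hinj : Function.Injective s₀ :=
      (Equiv.swap u (f ⟨0, hK1⟩)).injective.comp f.injective
    have hmem : s₀ ∈ (univ : Finset (Fin K → α)).filter
        (fun s => Function.Injective s ∧ ((∃ i, s i = u) ∨ (∃ i, s i = v))) := by
      refine Finset.mem_filter.2 ⟨Finset.mem_univ _, hinj, Or.inl ⟨⟨0, hK1⟩, ?_⟩⟩
      simp [hs₀, Equiv.swap_apply_right]
    refine Finset.sum_pos (fun s hs => ?_) ⟨s₀, hmem⟩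
    rw [hw]
    exact plW_pos p hp (Finset.mem_filter.1 hs).2.1 (fun j => Finset.mem_univ _)
  have hkey : p v * Nsum p univ K u v = p u * Nsum p univ K v u :=
    key p hp u v huv K univ (Finset.mem_univ u) (Finset.mem_univ v)
      (by simpa [Finset.card_univ] using hK)
  rw [hnum]
  rw [hden] at hDpos ⊢
  rw [div_eq_div_iff (by linarith) (by have := hp u; have := hp v; linarith)]
  linear_combination hkey
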